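/- Any free family (b₁,…,b_r) in (ℤ/dℤ)^n satisfies r ≤ n and can be completed by vectors b_{r+1},…,bₙ to a free basis (b₁,…,bₙ) of (ℤ/dℤ)^n. -/

import Mathlib

open Matrix Finset

/-- In `ZMod d` (finite), an element with trivial annihilator is a unit. -/
lemma zmod_isUnit_of_cancel {d : ℕ} [NeZero d] {y : ZMod d}
    (h : ∀ x : ZMod d, x * y = 0 → x = 0) : IsUnit y := by
  have hinj : Function.Injective (fun x : ZMod d => x * y) := by
    intro a c hac
    have : (a - c) * y = 0 := by
      simp only at hac
      rw [sub_mul, hac, sub_self]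
    exact sub_eq_zero.mp (h _ this)
  have hsurj := Finite.surjective_of_injective hinj
  obtain ⟨z, hz⟩ := hsurj 1
  exact IsUnit.of_mul_eq_one z (by rw [mul_comm]; exact hz)

theorem stmt_10 (d n r : ℕ) (hd : 2 ≤ d) (b : Fin r → (Fin n → ZMod d))
    (hfree : LinearIndependent (ZMod d) b) :
    ∃ h : r ≤ n, ∃ B : Module.Basis (Fin n) (ZMod d) (Fin n → ZMod d),
      ∀ i : Fin r, B (Fin.castLE h i) = b i := by
  haveI : NeZero d := ⟨by omega⟩
  classical
  set φ : ℤ →+* ZMod d := Int.castRingHom (ZMod d) with hφ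
  -- integer lifts
  set v : Fin r → (Fin n → ℤ) := fun i j => ((b i j).val : ℤ) with hv
  have hπ : ∀ i j, φ (v i j) = b i j := by
    intro i j
    simp [hv, hφ, ZMod.natCast_val, ZMod.cast_id]
  have hbli : ∀ c : Fin r → ZMod d, ∑ i, c i • b i = 0 → ∀ i, c i = 0 :=
    fun c hc => Fintype.linearIndependent_iff.mp hfree c hc
  -- linear independence of the lifts over ℤ, by descent
  have key : ∀ K : ℕ, ∀ c : Fin r → ℤ, (∑ i, (c i).natAbs) ≤ K →
      ∑ i, c i • v i = 0 → ∀ i, c i = 0 := by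
    intro K
    induction K with
    | zero =>
      intro c hK _ i
      have h0 : ∑ i, (c i).natAbs = 0 := Nat.le_zero.mp hK
      have h3 : (c i).natAbs = 0 := Finset.sum_eq_zero_iff.mp h0 i (Finset.mem_univ i)
      exact Int.natAbs_eq_zero.mp h3
    | succ K ih =>
      intro c hK hc i
      -- reduce mod d : each c i divisible by d
      have hdvd : ∀ i, (d : ℤ) ∣ c i := by
        intro i
        have h0 : ∑ j, (φ (c j)) • b j = 0 := by
          funext j'
          have := congrFun hc j'
          simp only [Finset.sum_apply, Pi.smul_apply, smul_eq_mul, Pi.zero_apply] at this ⊢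
          calc ∑ x : Fin r, φ (c x) * b x j' = φ (∑ x : Fin r, c x * v x j') := by
                rw [map_sum]; exact Finset.sum_congr rfl fun x _ => by rw [_root_.map_mul, hπ]
            _ = 0 := by rw [this]; simp
        have := hbli _ h0 i
        have h1 : ((c i : ℤ) : ZMod d) = 0 := this
        rwa [ZMod.intCast_zmod_eq_zero_iff_dvd] at h1
      set c' : Fin r → ℤ := fun i => c i / d with hc'
      have hcc' : ∀ i, c i = (d : ℤ) * c' i := fun i => (Int.mul_ediv_cancel' (hdvd i)).symm
      have hc'sum : ∑ i, (c' i).natAbs ≤ K := by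
        have h1 : ∑ i, (c i).natAbs = d * ∑ i, (c' i).natAbs := by
          rw [Finset.mul_sum]
          exact Finset.sum_congr rfl fun i _ => by rw [hcc' i, Int.natAbs_mul]; simp
        have h2 : 2 * ∑ i, (c' i).natAbs ≤ d * ∑ i, (c' i).natAbs :=
          Nat.mul_le_mul_right _ (by omega)
        omega
      have hc'0 : ∑ i, c' i • v i = 0 := by
        have : (d : ℤ) • ∑ i, c' i • v i = 0 := by
          rw [Finset.smul_sum]
          rw [← hc]
          exact Finset.sum_congr rfl fun i _ => by rw [smul_smul, ← hcc' i]
        have hd0 : (d : ℤ) ≠ 0 := by exact_mod_cast (by omega : d ≠ 0)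
        funext j'
        have := congrFun this j'
        simp only [Pi.smul_apply, smul_eq_mul, Pi.zero_apply] at this ⊢
        rcases mul_eq_zero.mp this with h | h
        · exact absurd h hd0
        · exact h
      have := ih c' hc'sum hc'0 i
      rw [hcc' i, this, mul_zero]
  have hvli : LinearIndependent ℤ v :=
    Fintype.linearIndependent_iff.mpr fun c hc => key _ c le_rfl hc
  -- Smith normal form
  set N : Submodule ℤ (Fin n → ℤ) := Submodule.span ℤ (Set.range v) with hN
  obtain ⟨bA, hbA⟩ : ∃ bA : Module.Basis (Fin r) ℤ N, ∀ j, (bA j : Fin n → ℤ) = v j :=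
    ⟨Module.Basis.span hvli, fun j => congrArg Subtype.val (Module.Basis.span_apply hvli j)⟩
  obtain ⟨m, snf⟩ := N.smithNormalForm (Pi.basisFun ℤ (Fin n))
  have hm : m = r := by
    have h1 : Module.finrank ℤ N = m := by
      rw [Module.finrank_eq_card_basis snf.bN, Fintype.card_fin]
    have h2 : Module.finrank ℤ N = r := by
      rw [Module.finrank_eq_card_basis bA, Fintype.card_fin]
    omega
  obtain ⟨bM, bN0, f0, a0, hsnf0⟩ := snf
  set bN : Module.Basis (Fin r) ℤ N := bN0.reindex (finCongr hm) with hbN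
  set a : Fin r → ℤ := fun i => a0 ((finCongr hm).symm i) with ha
  set f : Fin r → Fin n := fun i => f0 ((finCongr hm).symm i) with hf
  have hfinj : Function.Injective f := fun i j hij => by
    have := f0.injective hij
    exact (finCongr hm).symm.injective this
  have hsnf : ∀ i : Fin r, (bN i : Fin n → ℤ) = a i • bM (f i) := by
    intro i
    rw [hbN, Module.Basis.reindex_apply]
    exact hsnf0 _
  have hrn : r ≤ n := by
    have := Fintype.card_le_of_embedding f0
    simpa [hm] using this
  -- permutation aligning `Fin.castLE` with `f`
  have hσ : ∃ σ : Equiv.Perm (Fin n), ∀ i : Fin r, σ (Fin.castLE hrn i) = f i := by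
    let e1 : {k : Fin n // (k : ℕ) < r} ≃ Fin r :=
      { toFun := fun k => ⟨k.1, k.2⟩
        invFun := fun i => ⟨Fin.castLE hrn i, i.2⟩
        left_inv := fun k => rfl
        right_inv := fun i => rfl }
    let e2 : Fin r ≃ {k : Fin n // k ∈ Set.range f} := Equiv.ofInjective f hfinj
    refine ⟨(e1.trans e2).extendSubtype, fun i => ?_⟩
    have hmem : ((Fin.castLE hrn i : Fin n) : ℕ) < r := i.2
    rw [Equiv.extendSubtype_apply_of_mem (e1.trans e2) (Fin.castLE hrn i) hmem]
    rfl
  obtain ⟨σ, hσ⟩ := hσ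
  set P : Fin n → (Fin n → ℤ) := fun k => bM (σ k) with hP
  have hsnf' : ∀ i : Fin r, (bN i : Fin n → ℤ) = a i • P (Fin.castLE hrn i) := by
    intro i
    rw [hsnf i, hP]
    simp [hσ i]
  -- matrices over ℤ
  set T : Matrix (Fin r) (Fin r) ℤ := bN.toMatrix bA with hT
  set S : Matrix (Fin r) (Fin r) ℤ := bA.toMatrix bN with hS
  have hTdet : IsUnit T.det := by
    haveI : Invertible T := bN.invertibleToMatrix bA
    exact Matrix.isUnit_det_of_invertible T
  have hTS : ∀ i : Fin r, ∑ j, T i j * S j i = 1 := by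
    intro i
    have h1 : T * S = 1 := Module.Basis.toMatrix_mul_toMatrix_flip bN bA
    have := congrFun (congrFun h1 i) i
    simpa [Matrix.mul_apply, Matrix.one_apply] using this
  -- key vector identities
  have hAv : ∀ j : Fin r, v j = ∑ i, (T i j * a i) • P (Fin.castLE hrn i) := by
    intro j
    have h1 : (bA j : Fin n → ℤ) = ∑ i, T i j • (bN i : Fin n → ℤ) := by
      have := Module.Basis.sum_toMatrix_smul_self bN (⇑bA) j
      calc (bA j : Fin n → ℤ) = ((∑ i, T i j • bN i : N) : Fin n → ℤ) := by rw [this]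
        _ = ∑ i, T i j • (bN i : Fin n → ℤ) := by
            push_cast
            rfl
    rw [← hbA j, h1]
    exact Finset.sum_congr rfl fun i _ => by rw [hsnf' i, smul_smul]
  have hNA : ∀ i : Fin r, a i • P (Fin.castLE hrn i) = ∑ j, S j i • v j := by
    intro i
    have h1 : (bN i : Fin n → ℤ) = ∑ j, S j i • (bA j : Fin n → ℤ) := by
      have := Module.Basis.sum_toMatrix_smul_self bA (⇑bN) i
      calc (bN i : Fin n → ℤ) = ((∑ j, S j i • bA j : N) : Fin n → ℤ) := by rw [this]
        _ = ∑ j, S j i • (bA j : Fin n → ℤ) := by push_cast; rfl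
    rw [← hsnf' i, h1]
    exact Finset.sum_congr rfl fun j _ => by rw [hbA j]
  -- a i is a unit mod d
  have haunit : ∀ i : Fin r, IsUnit (φ (a i)) := by
    intro i
    apply zmod_isUnit_of_cancel
    intro x hx
    have h0 : ∑ j, (x * φ (S j i)) • b j = 0 := by
      funext j'
      simp only [Finset.sum_apply, Pi.smul_apply, smul_eq_mul, Pi.zero_apply]
      have := congrFun (hNA i) j'
      simp only [Finset.sum_apply, Pi.smul_apply, smul_eq_mul] at this
      calc ∑ j, x * φ (S j i) * b j j'
          = x * φ (∑ j, S j i * v j j') := by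
            rw [map_sum, Finset.mul_sum]
            exact Finset.sum_congr rfl fun j _ => by rw [_root_.map_mul, hπ]; ring
        _ = x * φ (a i * P (Fin.castLE hrn i) j') := by rw [← this]
        _ = (x * φ (a i)) * φ (P (Fin.castLE hrn i) j') := by rw [_root_.map_mul]; ring
        _ = 0 := by rw [hx, zero_mul]
    have hxs : ∀ j, x * φ (S j i) = 0 := hbli _ h0
    have : x = x * φ (∑ j, T i j * S j i) := by rw [hTS i]; simp
    rw [this, map_sum, Finset.mul_sum]
    apply Finset.sum_eq_zero
    intro j _
    rw [_root_.map_mul]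
    calc x * (φ (T i j) * φ (S j i)) = (x * φ (S j i)) * φ (T i j) := by ring
      _ = 0 := by rw [hxs j, zero_mul]
  -- matrices over ZMod d
  set Pm : Matrix (Fin n) (Fin n) ℤ := fun k j => P k j with hPm
  have hPdet : IsUnit (Pm.map φ).det := by
    have hPmT : Pmᵀ = (Pi.basisFun ℤ (Fin n)).toMatrix (⇑(bM.reindex σ.symm)) := by
      ext k j
      rw [Matrix.transpose_apply, Module.Basis.toMatrix_apply, Pi.basisFun_repr, Module.Basis.reindex_apply,
        Equiv.symm_symm]
    have : Invertible ((Pi.basisFun ℤ (Fin n)).toMatrix (⇑(bM.reindex σ.symm))) :=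
      (Pi.basisFun ℤ (Fin n)).invertibleToMatrix (bM.reindex σ.symm)
    have h1 : IsUnit Pmᵀ.det := by
      rw [hPmT]; exact Matrix.isUnit_det_of_invertible _
    rw [Matrix.det_transpose] at h1
    have : (Pm.map φ).det = φ Pm.det := (RingHom.map_det φ Pm).symm
    rw [this]
    exact h1.map φ
  set ea : Fin r ⊕ Fin (n - r) ≃ Fin n :=
    finSumFinEquiv.trans (finCongr (by omega)) with hea
  have heal : ∀ i : Fin r, ea (Sum.inl i) = Fin.castLE hrn i := by
    intro i
    apply Fin.ext
    simp [hea]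
  set B₁ : Matrix (Fin r) (Fin r) (ZMod d) := fun j i => φ (T i j * a i) with hB₁
  set Mh : Matrix (Fin n) (Fin n) (ZMod d) :=
    (Matrix.fromBlocks B₁ 0 0 1).submatrix ea.symm ea.symm with hMh
  set W : Matrix (Fin n) (Fin n) (ZMod d) := Mh * Pm.map φ with hW
  -- row computation
  have hrow : ∀ j : Fin r, ∀ j' : Fin n, W (Fin.castLE hrn j) j' = b j j' := by
    intro j j'
    have h1 : W (Fin.castLE hrn j) j' = ∑ l, Mh (Fin.castLE hrn j) l * φ (P l j') := by
      simp [hW, Matrix.mul_apply, hPm, Matrix.map_apply]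
      rfl
    rw [h1, ← Equiv.sum_comp ea (fun l => Mh (Fin.castLE hrn j) l * φ (P l j'))]
    rw [Fintype.sum_sum_type]
    have h2 : ∀ i : Fin r, Mh (Fin.castLE hrn j) (ea (Sum.inl i)) = B₁ j i := by
      intro i
      simp [hMh, ← heal j, Matrix.submatrix_apply]
    have h3 : ∀ i : Fin (n - r), Mh (Fin.castLE hrn j) (ea (Sum.inr i)) = 0 := by
      intro i
      simp [hMh, ← heal j, Matrix.submatrix_apply]
    calc (∑ i : Fin r, Mh (Fin.castLE hrn j) (ea (Sum.inl i)) * φ (P (ea (Sum.inl i)) j'))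
          + ∑ i : Fin (n - r), Mh (Fin.castLE hrn j) (ea (Sum.inr i)) * φ (P (ea (Sum.inr i)) j')
        = ∑ i : Fin r, B₁ j i * φ (P (Fin.castLE hrn i) j') := by
          have hz : ∑ i : Fin (n - r),
              Mh (Fin.castLE hrn j) (ea (Sum.inr i)) * φ (P (ea (Sum.inr i)) j') = 0 :=
            Finset.sum_eq_zero fun i _ => by rw [h3 i, zero_mul]
          rw [hz, add_zero]
          exact Finset.sum_congr rfl fun i _ => by rw [h2 i, heal i]
      _ = φ (∑ i : Fin r, (T i j * a i) * P (Fin.castLE hrn i) j') := by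
          rw [map_sum]
          exact Finset.sum_congr rfl fun i _ => by rw [hB₁, _root_.map_mul]
      _ = φ (v j j') := by
          congr 1
          have := congrFun (hAv j) j'
          simp only [Finset.sum_apply, Pi.smul_apply, smul_eq_mul] at this
          rw [this]
      _ = b j j' := hπ j j'
  -- determinant of W is a unit
  have hWdet : IsUnit W.det := by
    have hMhdet : Mh.det = B₁.det := by
      rw [hMh, Matrix.det_submatrix_equiv_self, Matrix.det_fromBlocks_zero₂₁, Matrix.det_one,
        mul_one]
    have hB₁det : IsUnit B₁.det := by
      have hfact : B₁ = (T.map φ)ᵀ * Matrix.diagonal (fun i => φ (a i)) := by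
        ext j i
        simp [hB₁, Matrix.mul_apply, Matrix.diagonal, Matrix.transpose_apply, _root_.map_mul,
          Finset.sum_ite_eq, Matrix.map_apply]
      rw [hfact, Matrix.det_mul, Matrix.det_transpose, Matrix.det_diagonal]
      apply IsUnit.mul
      · have : (T.map φ).det = φ T.det := (RingHom.map_det φ T).symm
        rw [this]; exact hTdet.map φ
      · exact Finset.prod_induction _ IsUnit (fun _ _ => IsUnit.mul) isUnit_one
          fun i _ => haunit i
    rw [hW, Matrix.det_mul, hMhdet]
    exact hB₁det.mul hPdet
  -- build the basis
  have hWT : Invertible Wᵀ :=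
    (Matrix.transposeInvertibleEquivInvertible W).symm (W.invertibleOfIsUnitDet hWdet)
  refine ⟨hrn, (Pi.basisFun (ZMod d) (Fin n)).map (Wᵀ.toLinearEquiv' hWT), fun i => ?_⟩
  funext j'
  rw [Module.Basis.map_apply]
  calc (Wᵀ.toLinearEquiv' hWT) (Pi.basisFun (ZMod d) (Fin n) (Fin.castLE hrn i)) j'
      = Wᵀ.mulVec (Pi.single (Fin.castLE hrn i) 1) j' := by
        rw [Pi.basisFun_apply]
        show Matrix.toLin' Wᵀ (Pi.single (Fin.castLE hrn i) 1) j' = _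
        rw [Matrix.toLin'_apply]
    _ = Wᵀ j' (Fin.castLE hrn i) * 1 := by rw [Matrix.mulVec_single]; rfl
    _ = W (Fin.castLE hrn i) j' := by rw [mul_one, Matrix.transpose_apply]
    _ = b i j' := hrow i j'
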